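/- (Corollary 3.3, first identity; analogue of Lusztig's Corollary 3.1.9.) For all integers N, M ≥ 0: B_{τi}^{(N)} B_i^{(M)} = ∑_{t=0}^{min(M,N)} B_i^{(M−t)} ( ∏_{s=1}^{t} (q_i^{2t−N−M−s+1} k̃_i − q_i^{−2t+N+M+s−1} k̃_{τi}) / (q_i^{s} − q_i^{−s}) ) B_{τi}^{(N−t)}. -/

import Mathlib

noncomputable section

/-- The quantum integer `[n]_v = (v^n - v^{-n})/(v - v^{-1})`. -/
def qint {K : Type*} [Field K] (v : RatFunc K) (n : ℤ) : RatFunc K :=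
  (v ^ n - v ^ (-n)) / (v - v⁻¹)

/-- The quantum factorial `[m]_v! = [1]_v [2]_v ⋯ [m]_v`. -/
def qfact {K : Type*} [Field K] (v : RatFunc K) (m : ℕ) : RatFunc K :=
  ∏ k ∈ Finset.range m, qint v ((k : ℤ) + 1)

/-- The divided power `x^{(m)} = x^m/[m]_v!` for `m ≥ 0`, and `0` for `m < 0`. -/
def dp {K : Type*} [Field K] {A : Type*} [Ring A] [Algebra (RatFunc K) A]
    (v : RatFunc K) (x : A) (m : ℤ) : A :=
  if m < 0 then 0 else (qfact v m.toNat)⁻¹ • x ^ m.toNat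

namespace Stmt9

variable {K : Type*} [Field K]

lemma X_zpow_ne_one (m : ℤ) (hm : m ≠ 0) : (RatFunc.X : RatFunc K) ^ m ≠ 1 := by
  have hX : (RatFunc.X : RatFunc K) ≠ 0 := RatFunc.X_ne_zero
  have key : ∀ k : ℕ, k ≠ 0 → (RatFunc.X : RatFunc K) ^ (k : ℤ) ≠ 1 := by
    intro k hk h
    rw [zpow_natCast, ← RatFunc.algebraMap_X (K := K), ← map_pow, ← map_one (algebraMap (Polynomial K) (RatFunc K))] at h
    have := RatFunc.algebraMap_injective K h
    have hdeg := congrArg Polynomial.natDegree this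
    simp [Polynomial.natDegree_X_pow] at hdeg
    exact hk hdeg
  rcases lt_or_gt_of_ne hm with h | h
  · intro hc
    have : (RatFunc.X : RatFunc K) ^ (-m) = 1 := by
      rw [zpow_neg, hc, inv_one]
    have hkm : -m = ((-m).toNat : ℤ) := by omega
    rw [hkm] at this
    exact key (-m).toNat (by omega) this
  · intro hc
    have hkm : m = (m.toNat : ℤ) := by omega
    rw [hkm] at hc
    exact key m.toNat (by omega) hc

section V
variable {v : RatFunc K} (hv0 : v ≠ 0) (hone : ∀ n : ℤ, n ≠ 0 → v ^ n ≠ 1)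

include hv0 hone in
lemma Dne (n : ℤ) (hn : n ≠ 0) : v ^ n - v ^ (-n) ≠ 0 := by
  rw [sub_ne_zero]
  intro h
  apply hone (2*n) (by omega)
  rw [two_mul, zpow_add₀ hv0]
  nth_rewrite 1 [h]
  rw [← zpow_add₀ hv0]
  simp

include hv0 hone in
lemma hd : v - v⁻¹ ≠ 0 := by
  have := Dne hv0 hone 1 one_ne_zero
  rwa [zpow_one, zpow_neg_one] at this

include hv0 hone in
lemma qint_ne (n : ℤ) (hn : n ≠ 0) : qint v n ≠ 0 :=
  div_ne_zero (Dne hv0 hone n hn) (hd hv0 hone)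

lemma qint_zero : qint v 0 = 0 := by simp [qint]

include hv0 hone in
lemma qint_one : qint v 1 = 1 := by
  rw [qint, zpow_one, zpow_neg_one, div_self (hd hv0 hone)]

include hv0 in
lemma qint_add (a b : ℤ) : qint v (a + b) = v ^ b * qint v a + v ^ (-a) * qint v b := by
  unfold qint
  rw [← mul_div_assoc, ← mul_div_assoc, ← add_div]
  congr 1
  rw [neg_add, zpow_add₀ hv0, zpow_add₀ hv0, zpow_neg, zpow_neg]
  ring

lemma qfact_succ (k : ℕ) : qfact v (k+1) = qfact v k * qint v ((k:ℤ)+1) :=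
  Finset.prod_range_succ _ k

include hv0 hone in
lemma qfact_ne (m : ℕ) : qfact v m ≠ 0 :=
  Finset.prod_ne_zero_iff.2 fun k _ => qint_ne hv0 hone _ (by omega)

end V

section Alg
variable {A : Type*} [Ring A] [Algebra (RatFunc K) A]
variable {v : RatFunc K} {Bi Bt ki kt : A}

lemma dp_natCast (x : A) (k : ℕ) : dp v x (k : ℤ) = (qfact v k)⁻¹ • x ^ k := by
  simp [dp]

lemma dp_neg (x : A) {m : ℤ} (hm : m < 0) : dp v x m = 0 := by
  simp [dp, hm]

lemma dp_zero (x : A) : dp v x 0 = 1 := by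
  simp [dp, qfact]

variable (hv0 : v ≠ 0) (hone : ∀ n : ℤ, n ≠ 0 → v ^ n ≠ 1)

include hv0 hone in
lemma mul_dp (x : A) (m : ℤ) : x * dp v x m = qint v (m+1) • dp v x (m+1) := by
  rcases lt_trichotomy m (-1) with h | h | h
  · rw [dp_neg x (by omega), dp_neg x (by omega : m + 1 < 0), mul_zero, smul_zero]
  · subst h
    rw [dp_neg x (by omega : (-1:ℤ) < 0), mul_zero]
    norm_num [qint_zero, zero_smul]
  · have hk : m = (m.toNat : ℤ) := by omega
    rw [hk, ← Nat.cast_one, ← Nat.cast_add, dp_natCast, dp_natCast]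
    rw [mul_smul_comm, ← pow_succ']
    rw [qfact_succ, smul_smul, mul_inv]
    have hq : qint v ((m.toNat : ℤ)+1) ≠ 0 := qint_ne hv0 hone _ (by omega)
    push_cast
    rw [mul_comm (qfact v m.toNat)⁻¹, ← mul_assoc, mul_inv_cancel₀ hq, one_mul]


end Alg

def Xp {K : Type*} [Field K] {A : Type*} [Ring A] [Algebra (RatFunc K) A]
    (v : RatFunc K) (ki kt : A) (b : ℤ) (t : ℕ) : A :=
  ((List.range t).map fun s : ℕ => v ^ (b - (s:ℤ)) • ki - v ^ ((s:ℤ) - b) • kt).prod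

def Dfact {K : Type*} [Field K] (v : RatFunc K) (t : ℕ) : RatFunc K :=
  ((List.range t).map fun s : ℕ => v ^ ((s:ℤ)+1) - v ^ (-((s:ℤ)+1))).prod

section Alg2
variable {A : Type*} [Ring A] [Algebra (RatFunc K) A]
variable {v : RatFunc K} {Bi Bt ki kt : A}

lemma Xp_zero : Xp v ki kt b 0 = 1 := by simp [Xp]

lemma Dfact_zero : Dfact v 0 = 1 := by simp [Dfact]

lemma Xp_succ_back (b : ℤ) (t : ℕ) :
    Xp v ki kt b (t+1)
      = Xp v ki kt b t * (v ^ (b - (t:ℤ)) • ki - v ^ ((t:ℤ) - b) • kt) := by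
  unfold Xp
  rw [List.range_succ, List.map_append, List.prod_append]
  simp

lemma Dfact_succ (t : ℕ) :
    Dfact v (t+1) = Dfact v t * (v ^ ((t:ℤ)+1) - v ^ (-((t:ℤ)+1))) := by
  unfold Dfact
  rw [List.range_succ, List.map_append, List.prod_append]
  simp

lemma Xp_succ_front (b : ℤ) (t : ℕ) :
    Xp v ki kt b (t+1)
      = (v ^ b • ki - v ^ (-b) • kt) * Xp v ki kt (b-1) t := by
  unfold Xp
  rw [List.range_succ_eq_map, List.map_cons, List.prod_cons, List.map_map]
  congr 1
  · norm_num
  · congr 1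
    apply List.map_congr_left
    intro s _
    have e1 : b - ((Nat.succ s : ℕ) : ℤ) = b - 1 - (s:ℤ) := by push_cast; ring
    have e2 : ((Nat.succ s : ℕ) : ℤ) - b = (s:ℤ) - (b - 1) := by push_cast; ring
    simp only [Function.comp_apply, e1, e2]

variable (hv0 : v ≠ 0) (hone : ∀ n : ℤ, n ≠ 0 → v ^ n ≠ 1)

include hv0 hone in
lemma Dfact_ne (t : ℕ) : Dfact v t ≠ 0 := by
  induction t with
  | zero => simp [Dfact_zero]
  | succ t ih =>
    rw [Dfact_succ]
    exact mul_ne_zero ih (Dne hv0 hone ((t:ℤ)+1) (by omega))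

lemma commute_Xp (z : A) (hzi : Commute z ki) (hzt : Commute z kt) (b : ℤ) (t : ℕ) :
    Commute z (Xp v ki kt b t) := by
  unfold Xp
  apply Commute.list_prod_right
  intro x hx
  simp only [List.mem_map] at hx
  obtain ⟨s, -, rfl⟩ := hx
  exact (hzi.smul_right _).sub_right (hzt.smul_right _)

include hv0 in
lemma Bt_mul_Xp (hBki : Bt * ki = v^(-2:ℤ) • (ki * Bt)) (hBkt : Bt * kt = v^(2:ℤ) • (kt * Bt))
    (t : ℕ) : ∀ b : ℤ, Bt * Xp v ki kt b t = Xp v ki kt (b-2) t * Bt := by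
  induction t with
  | zero => intro b; simp [Xp_zero]
  | succ t ih =>
    intro b
    rw [Xp_succ_front, Xp_succ_front, ← mul_assoc]
    have swap : Bt * (v ^ b • ki - v ^ (-b) • kt)
        = (v ^ (b-2) • ki - v ^ (-(b-2)) • kt) * Bt := by
      rw [mul_sub, mul_smul_comm, mul_smul_comm, hBki, hBkt,
        smul_smul, smul_smul, sub_mul, smul_mul_assoc, smul_mul_assoc,
        ← zpow_add₀ hv0, ← zpow_add₀ hv0]
      have e1 : b + -2 = b - 2 := by ring
      have e2 : -b + 2 = -(b-2) := by ring
      rw [e1, e2]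
    rw [swap, mul_assoc, ih (b-1), ← mul_assoc]
    congr 2
    ring

end Alg2

section Alg3
variable {A : Type*} [Ring A] [Algebra (RatFunc K) A]
variable {v : RatFunc K} {Bi Bt ki kt : A}
variable (hv0 : v ≠ 0) (hone : ∀ n : ℤ, n ≠ 0 → v ^ n ≠ 1)
variable (h1 : ki * Bi = v ^ (-2 : ℤ) • (Bi * ki))
variable (h3 : kt * Bi = v ^ (2 : ℤ) • (Bi * kt))
variable (h5 : Bt * Bi - Bi * Bt = (v - v⁻¹)⁻¹ • (ki - kt))

include hv0 h1 in
lemma ki_mul_pow (m : ℕ) : ki * Bi ^ m = v ^ (-2 * (m:ℤ)) • (Bi ^ m * ki) := by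
  induction m with
  | zero => simp
  | succ m ih =>
    rw [pow_succ', ← mul_assoc, h1, smul_mul_assoc, mul_assoc, ih, mul_smul_comm, smul_smul,
       ← zpow_add₀ hv0, ← mul_assoc, ← pow_succ']
    congr 1
    congr 1
    push_cast; ring

include hv0 h3 in
lemma kt_mul_pow (m : ℕ) : kt * Bi ^ m = v ^ (2 * (m:ℤ)) • (Bi ^ m * kt) := by
  induction m with
  | zero => simp
  | succ m ih =>
    rw [pow_succ', ← mul_assoc, h3, smul_mul_assoc, mul_assoc, ih, mul_smul_comm, smul_smul,
       ← zpow_add₀ hv0, ← mul_assoc, ← pow_succ']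
    congr 1
    congr 1
    push_cast; ring

include hv0 hone h1 h3 h5 in
lemma star_pow (m : ℕ) :
    Bt * Bi ^ (m+1) = Bi ^ (m+1) * Bt
      + Bi ^ m * ((((v - v⁻¹)⁻¹ * v ^ (-(m:ℤ)) * qint v ((m:ℤ)+1)) • ki
          - ((v - v⁻¹)⁻¹ * v ^ ((m:ℤ)) * qint v ((m:ℤ)+1)) • kt)) := by
  have hBtBi : Bt * Bi = Bi * Bt + (v - v⁻¹)⁻¹ • (ki - kt) := by
    rw [← h5]; abel
  induction m with
  | zero =>
    simp only [zero_add, pow_one, pow_zero, one_mul, Nat.cast_zero, neg_zero, zpow_zero,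
      mul_one, qint_one hv0 hone]
    rw [hBtBi, smul_sub]
  | succ m ih =>
    have key1 : qint v ((m:ℤ)+1+1) = v ^ (1:ℤ) * qint v ((m:ℤ)+1) + v ^ (-((m:ℤ)+1)) * qint v 1 := by
      rw [← qint_add hv0]
    have key2 : qint v ((m:ℤ)+1+1) = v ^ ((m:ℤ)+1) * qint v 1 + v ^ (-(1:ℤ)) * qint v ((m:ℤ)+1) := by
      rw [← qint_add hv0]; congr 1; ring
    rw [qint_one hv0 hone, mul_one] at key1 key2
    have step : Bt * Bi ^ (m+2) = (Bt * Bi) * Bi ^ (m+1) := by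
      rw [mul_assoc, ← pow_succ']
    rw [step, hBtBi, add_mul, mul_assoc, ih, smul_mul_assoc, sub_mul,
        ki_mul_pow hv0 h1 (m+1), kt_mul_pow hv0 h3 (m+1)]
    simp only [mul_add, mul_sub, mul_smul_comm, smul_mul_assoc, smul_smul, smul_sub,
      ← mul_assoc, ← pow_succ']
    push_cast
    rw [add_assoc]
    congr 1
    rw [sub_add_sub_comm, ← add_smul, ← add_smul]
    congr 1
    · congr 1
      rw [key1]
      rw [show v ^ (-2 * ((m:ℤ)+1)) = v ^ (-((m:ℤ)+1)) * v ^ (-((m:ℤ)+1)) by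
        rw [← zpow_add₀ hv0]; congr 1; ring]
      rw [show v ^ (-(m:ℤ)) = v ^ (-((m:ℤ)+1)) * v ^ (1:ℤ) by
        rw [← zpow_add₀ hv0]; congr 1; ring]
      ring
    · congr 1
      rw [key2]
      rw [show v ^ (2 * ((m:ℤ)+1)) = v ^ ((m:ℤ)+1) * v ^ ((m:ℤ)+1) by
        rw [← zpow_add₀ hv0]; congr 1; ring]
      rw [show v ^ ((m:ℤ)) = v ^ ((m:ℤ)+1) * v ^ (-(1:ℤ)) by
        rw [← zpow_add₀ hv0]; congr 1; ring]
      ring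

lemma cancel_aux (a b q : RatFunc K) (hq : q ≠ 0) : (a*q)⁻¹ * (b*q) = a⁻¹ * b := by
  rw [mul_inv]
  field_simp

include hv0 hone h1 h3 h5 in
lemma star_dp (m : ℤ) :
    Bt * dp v Bi m = dp v Bi m * Bt
      + dp v Bi (m-1) * (((v - v⁻¹)⁻¹ * v ^ (1-m)) • ki
          - ((v - v⁻¹)⁻¹ * v ^ (m-1)) • kt) := by
  rcases lt_trichotomy m 0 with h | h | h
  · rw [dp_neg _ h, dp_neg _ (by omega : m - 1 < 0)]
    simp
  · subst h
    rw [dp_zero, show (0:ℤ)-1 = -1 from rfl, dp_neg _ (by norm_num)]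
    simp
  · obtain ⟨k, rfl⟩ : ∃ k : ℕ, m = (k:ℤ)+1 := ⟨(m-1).toNat, by omega⟩
    have hq : qint v ((k:ℤ)+1) ≠ 0 := qint_ne hv0 hone _ (by omega)
    have hf : qfact v k ≠ 0 := qfact_ne hv0 hone k
    rw [show ((k:ℤ)+1) = ((k+1:ℕ):ℤ) by push_cast; ring, dp_natCast,
      show ((k+1:ℕ):ℤ)-1 = ((k:ℕ):ℤ) by push_cast; ring, dp_natCast,
      mul_smul_comm, star_pow hv0 hone h1 h3 h5 k, smul_add]
    congr 1
    · rw [smul_mul_assoc]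
    · simp only [mul_sub, mul_smul_comm, smul_sub, smul_smul, smul_mul_assoc]
      congr 1
      · congr 1
        rw [qfact_succ]
        push_cast
        rw [show (1:ℤ) - ((k:ℤ)+1) = -(k:ℤ) by ring]
        exact (cancel_aux _ _ _ hq).trans (mul_comm _ _)
      · congr 1
        rw [qfact_succ]
        exact (cancel_aux _ _ _ hq).trans (mul_comm _ _)
end Alg3

section Alg4
variable {A : Type*} [Ring A] [Algebra (RatFunc K) A]
variable {v : RatFunc K} {Bi Bt ki kt : A}
variable (hv0 : v ≠ 0) (hone : ∀ n : ℤ, n ≠ 0 → v ^ n ≠ 1)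
variable (hkk : ki * kt = kt * ki)

include hv0 hone hkk in
lemma middle (n m : ℤ) (t : ℕ) :
    qint v (n+1) • ((Dfact v (t+1))⁻¹ • Xp v ki kt (2*((t:ℤ)+1) - (n+1) - m) (t+1))
      = qint v (n - (t:ℤ)) • ((Dfact v (t+1))⁻¹ • Xp v ki kt (2*((t:ℤ)+1) - n - m - 2) (t+1))
        + (((v - v⁻¹)⁻¹ * v ^ (1 - (m - (t:ℤ)))) • ki
            - ((v - v⁻¹)⁻¹ * v ^ ((m - (t:ℤ)) - 1)) • kt)
            * ((Dfact v t)⁻¹ • Xp v ki kt (2*(t:ℤ) - n - m) t) := by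
  have hd' := hd hv0 hone
  set b : ℤ := 2*(t:ℤ) - n - m with hb
  rw [show 2*((t:ℤ)+1) - (n+1) - m = b+1 by rw [hb]; ring,
      show 2*((t:ℤ)+1) - n - m - 2 = b by rw [hb]; ring]
  have hfr : Xp v ki kt (b+1) (t+1)
      = (v ^ (b+1) • ki - v ^ (-(b+1)) • kt) * Xp v ki kt b t := by
    rw [Xp_succ_front (b+1) t, show b+1-1 = b by ring]
  have cik : Commute kt ki := hkk.symm
  have hcomm : Commute (v ^ (b - (t:ℤ)) • ki - v ^ ((t:ℤ) - b) • kt) (Xp v ki kt b t) :=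
    commute_Xp _ (Commute.sub_left ((Commute.refl ki).smul_left _) (cik.smul_left _))
      (Commute.sub_left ((show Commute ki kt from hkk).smul_left _)
        ((Commute.refl kt).smul_left _)) _ _
  have hbk : Xp v ki kt b (t+1)
      = (v ^ (b - (t:ℤ)) • ki - v ^ ((t:ℤ) - b) • kt) * Xp v ki kt b t := by
    rw [Xp_succ_back b t, ← hcomm.eq]
  rw [hfr, hbk, Dfact_succ]
  simp only [mul_inv, sub_mul, smul_mul_assoc, mul_smul_comm, smul_sub, smul_smul]
  rw [sub_add_sub_comm, ← add_smul, ← add_smul]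
  have hDt : Dfact v t ≠ 0 := Dfact_ne hv0 hone t
  have hE : v ^ ((t:ℤ)+1) - v ^ (-((t:ℤ)+1)) ≠ 0 := Dne hv0 hone _ (by omega)
  have hee : (v ^ ((t:ℤ)+1) - v ^ (-((t:ℤ)+1))) * (v ^ ((t:ℤ)+1) - v ^ (-((t:ℤ)+1)))⁻¹ = 1 :=
    mul_inv_cancel₀ hE
  have hqt : qint v ((t:ℤ)+1) = (v ^ ((t:ℤ)+1) - v ^ (-((t:ℤ)+1))) * (v - v⁻¹)⁻¹ := by
    rw [qint, div_eq_mul_inv]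
  have e4 : v ^ (-((t:ℤ)+1)) * v ^ ((t:ℤ)+1) = 1 := by
    rw [← zpow_add₀ hv0, show -((t:ℤ)+1) + ((t:ℤ)+1) = 0 by ring, zpow_zero]
  congr 1
  · congr 1
    have h := qint_add hv0 ((t:ℤ)+1) (n - (t:ℤ))
    rw [show ((t:ℤ)+1) + (n - (t:ℤ)) = n + 1 by ring, hqt] at h
    have e1 : v ^ (b+1) = v ^ (b - (t:ℤ)) * v ^ ((t:ℤ)+1) := by
      rw [← zpow_add₀ hv0]; congr 1; ring
    have e2 : v ^ (1 - (m - (t:ℤ))) = v ^ (b - (t:ℤ)) * v ^ (n - (t:ℤ)) * v ^ ((t:ℤ)+1) := by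
      rw [← zpow_add₀ hv0, ← zpow_add₀ hv0]; congr 1; rw [hb]; ring
    rw [e1, e2, h]
    linear_combination (v ^ (n - (t:ℤ)) * (v-v⁻¹)⁻¹ * (Dfact v t)⁻¹ * v ^ (b - (t:ℤ)) * v ^ ((t:ℤ)+1)) * hee
      + (qint v (n - (t:ℤ)) * (Dfact v t)⁻¹ * (v ^ ((t:ℤ)+1) - v ^ (-((t:ℤ)+1)))⁻¹ * v ^ (b - (t:ℤ))) * e4
  · congr 1
    have h2 := qint_add hv0 (n - (t:ℤ)) ((t:ℤ)+1)
    rw [show (n - (t:ℤ)) + ((t:ℤ)+1) = n + 1 by ring, hqt] at h2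
    have f1 : v ^ (-(b+1)) = v ^ ((t:ℤ) - b) * v ^ (-((t:ℤ)+1)) := by
      rw [← zpow_add₀ hv0]; congr 1; ring
    have f2 : v ^ ((m - (t:ℤ)) - 1) = v ^ ((t:ℤ) - b) * v ^ (-((t:ℤ)+1)) * v ^ (-(n - (t:ℤ))) := by
      rw [← zpow_add₀ hv0, ← zpow_add₀ hv0]; congr 1; rw [hb]; ring
    rw [f1, f2, h2]
    linear_combination (v ^ (-(n-(t:ℤ))) * (v-v⁻¹)⁻¹ * (Dfact v t)⁻¹ * v ^ ((t:ℤ)-b) * v ^ (-((t:ℤ)+1))) * hee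
      + (qint v (n - (t:ℤ)) * (Dfact v t)⁻¹ * (v ^ ((t:ℤ)+1) - v ^ (-((t:ℤ)+1)))⁻¹ * v ^ ((t:ℤ)-b)) * e4
end Alg4

section Main
variable {A : Type*} [Ring A] [Algebra (RatFunc K) A]

def Trm (v : RatFunc K) (Bi Bt ki kt : A) (n m : ℤ) (t : ℕ) : A :=
  dp v Bi (m - (t:ℤ)) * ((Dfact v t)⁻¹ • Xp v ki kt (2*(t:ℤ) - n - m) t)
    * dp v Bt (n - (t:ℤ))

def TA (v : RatFunc K) (Bi Bt ki kt : A) (n m : ℤ) (t : ℕ) : A :=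
  qint v (n - (t:ℤ) + 1) •
    (dp v Bi (m - (t:ℤ)) * ((Dfact v t)⁻¹ • Xp v ki kt (2*(t:ℤ) - n - m - 2) t)
      * dp v Bt (n - (t:ℤ) + 1))

def TB (v : RatFunc K) (Bi Bt ki kt : A) (n m : ℤ) (t : ℕ) : A :=
  dp v Bi (m - (t:ℤ) - 1) *
    (((((v - v⁻¹)⁻¹ * v ^ (1 - (m - (t:ℤ)))) • ki
        - ((v - v⁻¹)⁻¹ * v ^ ((m - (t:ℤ)) - 1)) • kt))
      * ((Dfact v t)⁻¹ • Xp v ki kt (2*(t:ℤ) - n - m) t))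
    * dp v Bt (n - (t:ℤ))

variable {v : RatFunc K} {Bi Bt ki kt : A}
variable (hv0 : v ≠ 0) (hone : ∀ n : ℤ, n ≠ 0 → v ^ n ≠ 1)
variable (hkk : ki * kt = kt * ki)
variable (h1 : ki * Bi = v ^ (-2 : ℤ) • (Bi * ki))
variable (h2 : kt * Bt = v ^ (-2 : ℤ) • (Bt * kt))
variable (h3 : kt * Bi = v ^ (2 : ℤ) • (Bi * kt))
variable (h4 : ki * Bt = v ^ (2 : ℤ) • (Bt * ki))
variable (h5 : Bt * Bi - Bi * Bt = (v - v⁻¹)⁻¹ • (ki - kt))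

include hv0 h4 in
lemma hBki' : Bt * ki = v ^ (-2:ℤ) • (ki * Bt) := by
  conv_lhs => rw [show Bt * ki = Bt * ki from rfl]
  rw [h4, smul_smul, ← zpow_add₀ hv0, show (-2:ℤ) + 2 = 0 by ring, zpow_zero, one_smul]

include hv0 h2 in
lemma hBkt' : Bt * kt = v ^ (2:ℤ) • (kt * Bt) := by
  conv_rhs => rw [h2]
  rw [smul_smul, ← zpow_add₀ hv0, show (2:ℤ) + -2 = 0 by ring, zpow_zero, one_smul]

include hv0 hone h1 h2 h3 h4 h5 in
lemma BtTrm (n m : ℤ) (t : ℕ) :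
    Bt * Trm v Bi Bt ki kt n m t
      = TA v Bi Bt ki kt n m t + TB v Bi Bt ki kt n m t := by
  have hBki := hBki' hv0 h4
  have hBkt := hBkt' hv0 h2
  unfold Trm TA TB
  rw [← mul_assoc, ← mul_assoc, star_dp hv0 hone h1 h3 h5 (m - (t:ℤ)), add_mul, add_mul]
  congr 1
  · rw [mul_assoc (dp v Bi (m - (t:ℤ))) Bt, mul_smul_comm, Bt_mul_Xp hv0 hBki hBkt t]
    simp only [smul_mul_assoc, mul_smul_comm, mul_assoc]
    rw [mul_dp hv0 hone Bt (n - (t:ℤ))]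
    simp only [mul_smul_comm, smul_smul]
    rw [mul_comm ((Dfact v t)⁻¹) (qint v (n - (t:ℤ) + 1))]
  · simp only [smul_mul_assoc, mul_assoc]

lemma key0 (n m : ℤ) (hq : qint v (n+1) ≠ 0) :
    Trm v Bi Bt ki kt (n+1) m 0 = (qint v (n+1))⁻¹ • TA v Bi Bt ki kt n m 0 := by
  unfold Trm TA
  simp only [Nat.cast_zero, sub_zero, Xp_zero, Dfact_zero, inv_one, one_smul, mul_one]
  rw [smul_smul, inv_mul_cancel₀ hq, one_smul]

include hv0 hone hkk in
lemma keyt (n m : ℤ) (t : ℕ) (hq : qint v (n+1) ≠ 0) :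
    Trm v Bi Bt ki kt (n+1) m (t+1)
      = (qint v (n+1))⁻¹ • (TA v Bi Bt ki kt n m (t+1) + TB v Bi Bt ki kt n m t) := by
  rw [eq_inv_smul_iff₀ hq]
  unfold Trm TA TB
  push_cast
  rw [show m - ((t:ℤ)+1) = m - (t:ℤ) - 1 by ring,
      show n + 1 - ((t:ℤ)+1) = n - (t:ℤ) by ring,
      show n - ((t:ℤ)+1) + 1 = n - (t:ℤ) by ring]
  rw [← smul_mul_assoc, ← mul_smul_comm, ← smul_mul_assoc, ← mul_smul_comm]
  rw [← add_mul, ← mul_add]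
  rw [middle hv0 hone hkk n m t]

include hv0 hone hkk h1 h2 h3 h4 h5 in
lemma main (M : ℕ) : ∀ N : ℕ, dp v Bt (N:ℤ) * dp v Bi (M:ℤ)
    = ∑ t ∈ Finset.range (N+1), Trm v Bi Bt ki kt (N:ℤ) (M:ℤ) t := by
  intro N
  induction N with
  | zero =>
    rw [Finset.sum_range_one]
    unfold Trm
    simp [dp_zero, Xp_zero, Dfact_zero]
  | succ N ih =>
    have hq : qint v ((N:ℤ)+1) ≠ 0 := qint_ne hv0 hone _ (by omega)
    have hstep : dp v Bt ((N:ℤ)+1) = (qint v ((N:ℤ)+1))⁻¹ • (Bt * dp v Bt (N:ℤ)) := by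
      rw [mul_dp hv0 hone, smul_smul, inv_mul_cancel₀ hq, one_smul]
    have hTA_top : TA v Bi Bt ki kt (N:ℤ) (M:ℤ) (N+1) = 0 := by
      unfold TA
      rw [show (N:ℤ) - ((N+1:ℕ):ℤ) + 1 = 0 by push_cast; ring, qint_zero, zero_smul]
    push_cast
    calc dp v Bt ((N:ℤ)+1) * dp v Bi (M:ℤ)
        = (qint v ((N:ℤ)+1))⁻¹ • ∑ t ∈ Finset.range (N+1),
            (TA v Bi Bt ki kt (N:ℤ) (M:ℤ) t + TB v Bi Bt ki kt (N:ℤ) (M:ℤ) t) := by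
          rw [hstep, smul_mul_assoc, mul_assoc, ih, Finset.mul_sum]
          congr 1
          exact Finset.sum_congr rfl fun t _ => BtTrm hv0 hone h1 h2 h3 h4 h5 (N:ℤ) (M:ℤ) t
      _ = (qint v ((N:ℤ)+1))⁻¹ • (∑ t ∈ Finset.range (N+1), TA v Bi Bt ki kt (N:ℤ) (M:ℤ) t
            + ∑ t ∈ Finset.range (N+1), TB v Bi Bt ki kt (N:ℤ) (M:ℤ) t) := by
          rw [Finset.sum_add_distrib]
      _ = (qint v ((N:ℤ)+1))⁻¹ • (∑ t ∈ Finset.range (N+2), TA v Bi Bt ki kt (N:ℤ) (M:ℤ) t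
            + ∑ t ∈ Finset.range (N+1), TB v Bi Bt ki kt (N:ℤ) (M:ℤ) t) := by
          rw [Finset.sum_range_succ _ (N+1), hTA_top, add_zero]
      _ = (qint v ((N:ℤ)+1))⁻¹ • ((∑ t ∈ Finset.range (N+1), TA v Bi Bt ki kt (N:ℤ) (M:ℤ) (t+1)
            + TA v Bi Bt ki kt (N:ℤ) (M:ℤ) 0)
            + ∑ t ∈ Finset.range (N+1), TB v Bi Bt ki kt (N:ℤ) (M:ℤ) t) := by
          rw [Finset.sum_range_succ']
      _ = (qint v ((N:ℤ)+1))⁻¹ • (∑ t ∈ Finset.range (N+1),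
              (TA v Bi Bt ki kt (N:ℤ) (M:ℤ) (t+1) + TB v Bi Bt ki kt (N:ℤ) (M:ℤ) t)
            + TA v Bi Bt ki kt (N:ℤ) (M:ℤ) 0) := by
          rw [Finset.sum_add_distrib]; congr 1; abel
      _ = ∑ t ∈ Finset.range (N+1), (qint v ((N:ℤ)+1))⁻¹ •
              (TA v Bi Bt ki kt (N:ℤ) (M:ℤ) (t+1) + TB v Bi Bt ki kt (N:ℤ) (M:ℤ) t)
            + (qint v ((N:ℤ)+1))⁻¹ • TA v Bi Bt ki kt (N:ℤ) (M:ℤ) 0 := by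
          rw [smul_add, Finset.smul_sum]
      _ = ∑ t ∈ Finset.range (N+1), Trm v Bi Bt ki kt ((N:ℤ)+1) (M:ℤ) (t+1)
            + Trm v Bi Bt ki kt ((N:ℤ)+1) (M:ℤ) 0 := by
          rw [← key0 (n := (N:ℤ)) (m := (M:ℤ)) hq]
          congr 1
          exact Finset.sum_congr rfl fun t _ =>
            (keyt hv0 hone hkk (N:ℤ) (M:ℤ) t hq).symm
      _ = ∑ t ∈ Finset.range (N+1+1), Trm v Bi Bt ki kt ((N:ℤ)+1) (M:ℤ) t :=
          (Finset.sum_range_succ' _ _).symm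
end Main

section Glue
variable {A : Type*} [Ring A] [Algebra (RatFunc K) A]
variable {v : RatFunc K} {Bi Bt ki kt : A}

lemma coe_prod {β : Type*} [Monoid β] (t : ℕ) (f : ℤ → β) :
    (List.map f ((List.range t).flatMap fun a => (pure ((a:ℕ) : ℤ) : List ℤ))).prod
      = ((List.range t).map fun s : ℕ => f ((s:ℕ) : ℤ)).prod := by
  rw [show (fun a : ℕ => (pure ((a:ℕ):ℤ) : List ℤ)) = pure ∘ ((↑·) : ℕ → ℤ) from rfl,
      List.flatMap_pure_eq_map, List.map_map]
  rfl

lemma list_eq (b : ℤ) (t : ℕ) :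
    ((List.range t).map fun s : ℕ =>
        (v ^ ((s:ℤ)+1) - v ^ (-((s:ℤ)+1)))⁻¹ •
          (v ^ (b - (s:ℤ)) • ki - v ^ ((s:ℤ) - b) • kt)).prod
      = (Dfact v t)⁻¹ • Xp v ki kt b t := by
  induction t with
  | zero => simp [Xp_zero, Dfact_zero]
  | succ t ih =>
    rw [List.range_succ, List.map_append, List.prod_append, ih, Dfact_succ, Xp_succ_back]
    simp only [List.map_cons, List.map_nil, List.prod_cons, List.prod_nil, mul_one]
    rw [mul_inv, smul_mul_assoc, mul_smul_comm, smul_smul]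
end Glue
end Stmt9

/-- (Corollary 3.3, first identity; analogue of Lusztig's Corollary 3.1.9.)
For all N, M ≥ 0:
B_{τi}^{(N)} B_i^{(M)} = ∑_{t=0}^{min(M,N)} B_i^{(M−t)}
  ( ∏_{s=1}^{t} (q_i^{2t−N−M−s+1} k̃_i − q_i^{−2t+N+M+s−1} k̃_{τi}) / (q_i^s − q_i^{−s}) )
  B_{τi}^{(N−t)}. -/
theorem stmt9 {K : Type*} [Field K] [CharZero K]
    {A : Type*} [Ring A] [Algebra (RatFunc K) A]
    (ε : ℕ) (hε : 0 < ε) (v : RatFunc K) (hv : v = RatFunc.X ^ ε)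
    (Bi Bt ki kt : A)
    (hkk : ki * kt = kt * ki)
    (h1 : ki * Bi = v ^ (-2 : ℤ) • (Bi * ki))
    (h2 : kt * Bt = v ^ (-2 : ℤ) • (Bt * kt))
    (h3 : kt * Bi = v ^ (2 : ℤ) • (Bi * kt))
    (h4 : ki * Bt = v ^ (2 : ℤ) • (Bt * ki))
    (h5 : Bt * Bi - Bi * Bt = (v - v⁻¹)⁻¹ • (ki - kt))
    (N M : ℕ) :
    dp v Bt (N : ℤ) * dp v Bi (M : ℤ)
      = ∑ t ∈ Finset.range (min M N + 1),
          dp v Bi ((M : ℤ) - (t : ℤ)) *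
            ((List.range t).map fun s =>
              (v ^ ((s : ℤ) + 1) - v ^ (-((s : ℤ) + 1)))⁻¹ •
                (v ^ (2 * (t : ℤ) - (N : ℤ) - (M : ℤ) - (s : ℤ)) • ki
                  - v ^ (-(2 * (t : ℤ)) + (N : ℤ) + (M : ℤ) + (s : ℤ)) • kt)).prod *
            dp v Bt ((N : ℤ) - (t : ℤ)) := by

  have hv0 : v ≠ 0 := by rw [hv]; exact pow_ne_zero _ RatFunc.X_ne_zero
  have hone : ∀ n : ℤ, n ≠ 0 → v ^ n ≠ 1 := by
    intro n hn
    rw [hv, ← zpow_natCast RatFunc.X ε, ← zpow_mul]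
    exact Stmt9.X_zpow_ne_one _ (mul_ne_zero (by exact_mod_cast hε.ne') hn)
  rw [Stmt9.main hv0 hone hkk h1 h2 h3 h4 h5 M N]
  have hsub : Finset.range (min M N + 1) ⊆ Finset.range (N+1) :=
    Finset.range_subset_range.2 (by omega)
  rw [← Finset.sum_subset hsub (by
    intro t ht hnt
    simp only [Finset.mem_range] at ht hnt
    have hMt : (M:ℤ) - (t:ℤ) < 0 := by
      have : M < t := by omega
      omega
    unfold Stmt9.Trm
    rw [Stmt9.dp_neg _ hMt, zero_mul, zero_mul])]
  apply Finset.sum_congr rfl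
  intro t ht
  unfold Stmt9.Trm
  congr 1
  congr 1
  refine .trans ?_ (Stmt9.coe_prod t _).symm
  refine .trans (Stmt9.list_eq (2*(t:ℤ) - (N:ℤ) - (M:ℤ)) t).symm ?_
  congr 1
  apply List.map_congr_left
  intro s _
  rw [show (s:ℤ) - (2*(t:ℤ) - (N:ℤ) - (M:ℤ)) = -(2 * (t:ℤ)) + (N:ℤ) + (M:ℤ) + (s:ℤ) by ring]
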